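/- Let T be a square complex matrix with trace norm ‖T‖₁ < 1. Then |det(1 + T) − 1| ≤ ‖T‖₁/(1 − ‖T‖₁). -/

import Mathlib

open MeasureTheory
open scoped ComplexOrder

noncomputable section

namespace Chiral

/-- The ℓ²-operator norm of a square complex matrix. -/
def opNorm {n : Type*} [Fintype n] [DecidableEq n] (T : Matrix n n ℂ) : ℝ :=
  ‖Matrix.toEuclideanCLM (𝕜 := ℂ) T‖

/-- The trace norm `Tr √(T*T)` of a square complex matrix. -/
def traceNorm {n : Type*} [Fintype n] [DecidableEq n] (T : Matrix n n ℂ) : ℝ :=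
  (((Matrix.posSemidef_conjTranspose_mul_self T).1.eigenvectorUnitary : Matrix n n ℂ) *
    Matrix.diagonal (((↑) : ℝ → ℂ) ∘ Real.sqrt ∘ (Matrix.posSemidef_conjTranspose_mul_self T).1.eigenvalues) *
    (star (Matrix.posSemidef_conjTranspose_mul_self T).1.eigenvectorUnitary : Matrix n n ℂ)).trace.re

open Classical in
/-- Functional calculus of a Hermitian matrix: same eigenvectors, eigenvalue `E`
replaced by `f E`.  (Junk value `0` if the matrix is not Hermitian.) -/
def matFun {n : Type*} [Fintype n] [DecidableEq n] (f : ℝ → ℂ) (H : Matrix n n ℂ) :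
    Matrix n n ℂ :=
  if hH : H.IsHermitian then
    (hH.eigenvectorUnitary : Matrix n n ℂ) *
      Matrix.diagonal (fun i => f (hH.eigenvalues i)) *
      star (hH.eigenvectorUnitary : Matrix n n ℂ)
  else 0

/-- The matrix exponential. -/
def matExp {n : Type*} [Fintype n] [DecidableEq n] (M : Matrix n n ℂ) : Matrix n n ℂ :=
  NormedSpace.exp M

/-- `S = tanh (H/δ)` by functional calculus. -/
def tanhOf {n : Type*} [Fintype n] [DecidableEq n] (δ : ℝ) (H : Matrix n n ℂ) :
    Matrix n n ℂ :=
  matFun (fun E => (Real.tanh (E / δ) : ℂ)) H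

/-- Index set of the finite chain of length `L` with two internal degrees of freedom. -/
abbrev Site (L : ℕ) := Fin L × Fin 2

/-- The `2×2` block of a matrix on the chain corresponding to sites `x, y`. -/
def matBlock {L : ℕ} (T : Matrix (Site L) (Site L) ℂ) (x y : Fin L) :
    Matrix (Fin 2) (Fin 2) ℂ :=
  Matrix.of fun s s' => T (x, s) (y, s')

/-- A finite Hamiltonian is short range with parameters `d`, `K`. -/
def FinShortRange {L : ℕ} (H : Matrix (Site L) (Site L) ℂ) (d K : ℝ) : Prop :=
  ∀ x : Fin L, ∑ y : Fin L,
    opNorm (matBlock H x y) * Real.exp (|((x : ℕ) : ℝ) - ((y : ℕ) : ℝ)| / d) ≤ K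

/-- The chiral operator `C` on the finite chain: `+1` on the `A` component,
`-1` on the `B` component. -/
def chiralC (L : ℕ) : Matrix (Site L) (Site L) ℂ :=
  Matrix.diagonal fun p => if p.2 = 0 then 1 else -1

/-- The diagonal matrix `θ(X)` associated to a switch function `θ`. -/
def switchX {L : ℕ} (θ : Fin L → ℝ) : Matrix (Site L) (Site L) ℂ :=
  Matrix.diagonal fun p => (θ p.1 : ℂ)

/-- The standard switch function: `1` on the left half (`x < L/2`), `0` on the right half. -/
def midSwitch (L : ℕ) : Fin L → ℝ := fun x => if ((x : ℕ) : ℝ) < (L : ℝ) / 2 then 1 else 0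

/-- The edge index `Tr (C θ(X) (1 - S²))`. -/
def edgeIndex {L : ℕ} (θ : Fin L → ℝ) (S : Matrix (Site L) (Site L) ℂ) : ℂ :=
  Matrix.trace (chiralC L * switchX θ * (1 - S * S))

/-- The bulk index `½ Tr (C S [θ(X), S])`. -/
def bulkIndex {L : ℕ} (θ : Fin L → ℝ) (S : Matrix (Site L) (Site L) ℂ) : ℂ :=
  (1 / 2 : ℂ) * Matrix.trace (chiralC L * S * (switchX θ * S - S * switchX θ))

/-- The bulk Hilbert space `ℓ²(ℤ; ℂ²)`. -/
abbrev BulkSpace := lp (fun _ : ℤ => EuclideanSpace ℂ (Fin 2)) 2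

/-- Bounded operators on the bulk Hilbert space. -/
abbrev BulkOp := BulkSpace →L[ℂ] BulkSpace

/-- The canonical basis vector at site `x` with internal index `s`. -/
def bvec (x : ℤ) (s : Fin 2) : BulkSpace := lp.single 2 x (EuclideanSpace.single s 1)

/-- The `2×2` block `T_{x,y}` of a bulk operator. -/
def bulkBlock (T : BulkOp) (x y : ℤ) : Matrix (Fin 2) (Fin 2) ℂ :=
  Matrix.of fun s s' => (inner ℂ (bvec x s) (T (bvec y s')) : ℂ)

/-- A bulk Hamiltonian is short range with parameters `d`, `K`:
`sup_x ∑_y ‖T_{x,y}‖ e^{|x-y|/d} ≤ K`. -/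
def BulkShortRange (T : BulkOp) (d K : ℝ) : Prop :=
  ∀ x : ℤ,
    Summable (fun y : ℤ => opNorm (bulkBlock T x y) * Real.exp (|((x : ℝ)) - ((y : ℝ))| / d)) ∧
    ∑' y : ℤ, opNorm (bulkBlock T x y) * Real.exp (|((x : ℝ)) - ((y : ℝ))| / d) ≤ K

/-- The spectrum of `T` does not meet the open interval `(-Δ, Δ)`. -/
def HasGap (T : BulkOp) (Δ : ℝ) : Prop :=
  ∀ r : ℝ, |r| < Δ → (r : ℂ) ∉ spectrum ℂ T

/-- The on-site chiral matrix `diag(1, -1)`. -/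
def c2 : Matrix (Fin 2) (Fin 2) ℂ := Matrix.diagonal fun s => if s = 0 then 1 else -1

/-- A bulk operator is chiral: it anticommutes with the bulk chiral operator
(expressed blockwise, which is equivalent). -/
def ChiralBulk (T : BulkOp) : Prop :=
  ∀ x y : ℤ, c2 * bulkBlock T x y + bulkBlock T x y * c2 = 0

/-- The restriction `ι* T ι` of a bulk operator to the finite open chain of length `L`. -/
def restrict (L : ℕ) (T : BulkOp) : Matrix (Site L) (Site L) ℂ :=
  Matrix.of fun p q => bulkBlock T ((p.1 : ℕ) : ℤ) ((q.1 : ℕ) : ℤ) p.2 q.2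

section Aux

variable {n : Type*} [Fintype n] [DecidableEq n]

lemma traceNorm_eq (T : Matrix n n ℂ) :
    traceNorm T = ∑ i, Real.sqrt ((Matrix.posSemidef_conjTranspose_mul_self T).1.eigenvalues i) := by
  set hH := (Matrix.posSemidef_conjTranspose_mul_self T).1
  have h2 : (star (hH.eigenvectorUnitary : Matrix n n ℂ)) * (hH.eigenvectorUnitary : Matrix n n ℂ) = 1 :=
    Matrix.UnitaryGroup.star_mul_self _
  rw [traceNorm, Matrix.trace_mul_cycle, h2, Matrix.one_mul,
    Matrix.trace_diagonal]
  simp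

lemma traceNorm_nonneg (T : Matrix n n ℂ) : 0 ≤ traceNorm T := by
  rw [traceNorm_eq]
  exact Finset.sum_nonneg fun i _ => Real.sqrt_nonneg _

lemma diag_entry_eq_inner (M V : Matrix n n ℂ) (i : n) :
    (star V * M * V) i i =
      inner ℂ ((WithLp.equiv 2 (n → ℂ)).symm (fun j => V j i))
        (Matrix.toEuclideanCLM (𝕜 := ℂ) M ((WithLp.equiv 2 (n → ℂ)).symm (fun j => V j i))) := by
  rw [WithLp.equiv_symm_apply, Matrix.toEuclideanCLM_toLp]
  simp only [PiLp.inner_apply, RCLike.inner_apply]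
  simp only [Matrix.mul_apply, Matrix.toLin'_apply, Matrix.mulVec, dotProduct,
    Matrix.star_apply, RCLike.star_def]
  simp only [Finset.sum_mul]
  rw [Finset.sum_comm]
  exact Finset.sum_congr rfl fun a _ => Finset.sum_congr rfl fun b _ => by ring

lemma abs_trace_mul_le (T B : Matrix n n ℂ) :
    ‖Matrix.trace (B * T)‖ ≤ opNorm B * traceNorm T := by
  classical
  set hH := (Matrix.posSemidef_conjTranspose_mul_self T).1 with hHdef
  set V : Matrix n n ℂ := (hH.eigenvectorUnitary : Matrix n n ℂ) with hV
  have h1 : V * star V = 1 := Matrix.mem_unitaryGroup_iff.mp hH.eigenvectorUnitary.2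
  have h2 : star V * V = 1 := Matrix.UnitaryGroup.star_mul_self _
  set w : n → EuclideanSpace ℂ n := fun i => (WithLp.equiv 2 (n → ℂ)).symm (fun j => V j i) with hw
  -- norms of w i
  have hwnorm : ∀ i, ‖w i‖ = 1 := by
    intro i
    have : (inner ℂ (w i) (w i) : ℂ) = 1 := by
      have h := diag_entry_eq_inner (1 : Matrix n n ℂ) V i
      rw [Matrix.mul_one, h2, map_one] at h
      simpa [hw] using h.symm
    have h := inner_self_eq_norm_sq_to_K (𝕜 := ℂ) (w i)
    rw [this] at h
    have : (‖w i‖ : ℂ) ^ 2 = 1 := h.symm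
    have hr : ‖w i‖ ^ 2 = 1 := by exact_mod_cast this
    nlinarith [norm_nonneg (w i)]
  -- norm of T applied to w i
  have hTw : ∀ i, ‖Matrix.toEuclideanCLM (𝕜 := ℂ) T (w i)‖
      = Real.sqrt (hH.eigenvalues i) := by
    intro i
    have hdiag : star V * (T.conjTranspose * T) * V = Matrix.diagonal (RCLike.ofReal ∘ hH.eigenvalues) := by
      conv_lhs => rw [hH.spectral_theorem]
      rw [Unitary.conjStarAlgAut_apply]
      rw [← hV, show star V * (V * Matrix.diagonal (RCLike.ofReal ∘ hH.eigenvalues) * star V) * V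
          = (star V * V) * Matrix.diagonal (RCLike.ofReal ∘ hH.eigenvalues) * (star V * V) by
        noncomm_ring, h2, Matrix.one_mul, Matrix.mul_one]
    have hin : (inner ℂ (w i) (Matrix.toEuclideanCLM (𝕜 := ℂ) (T.conjTranspose * T) (w i)) : ℂ)
        = (hH.eigenvalues i : ℂ) := by
      rw [← diag_entry_eq_inner, hdiag]
      simp
    rw [map_mul] at hin
    have hadj : Matrix.toEuclideanCLM (𝕜 := ℂ) T.conjTranspose
        = ContinuousLinearMap.adjoint (Matrix.toEuclideanCLM (𝕜 := ℂ) T) := by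
      rw [← ContinuousLinearMap.star_eq_adjoint, ← Matrix.star_eq_conjTranspose, map_star]
    rw [ContinuousLinearMap.mul_apply, hadj, ContinuousLinearMap.adjoint_inner_right] at hin
    have := inner_self_eq_norm_sq_to_K (𝕜 := ℂ) (Matrix.toEuclideanCLM (𝕜 := ℂ) T (w i))
    rw [hin] at this
    have hr : hH.eigenvalues i = ‖Matrix.toEuclideanCLM (𝕜 := ℂ) T (w i)‖ ^ 2 := by
      have hc : ((hH.eigenvalues i : ℝ) : ℂ)
          = ((‖Matrix.toEuclideanCLM (𝕜 := ℂ) T (w i)‖ ^ 2 : ℝ) : ℂ) := by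
        push_cast
        exact this
      exact_mod_cast hc
    rw [hr, Real.sqrt_sq (norm_nonneg _)]
  -- trace invariance
  have htr : Matrix.trace (B * T) = Matrix.trace (star V * (B * T) * V) := by
    rw [Matrix.trace_mul_cycle, ← Matrix.mul_assoc, h1, Matrix.one_mul]
  rw [htr, Matrix.trace]
  refine le_trans (norm_sum_le _ _) ?_
  rw [traceNorm_eq, Finset.mul_sum]
  refine Finset.sum_le_sum fun i _ => ?_
  rw [Matrix.diag_apply, diag_entry_eq_inner, map_mul, ContinuousLinearMap.mul_apply]
  calc ‖inner ℂ (w i) (Matrix.toEuclideanCLM (𝕜 := ℂ) B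
        (Matrix.toEuclideanCLM (𝕜 := ℂ) T (w i)))‖
      ≤ ‖w i‖ * ‖Matrix.toEuclideanCLM (𝕜 := ℂ) B (Matrix.toEuclideanCLM (𝕜 := ℂ) T (w i))‖ := by
        exact norm_inner_le_norm _ _
    _ ≤ 1 * (opNorm B * ‖Matrix.toEuclideanCLM (𝕜 := ℂ) T (w i)‖) := by
        rw [hwnorm i, one_mul, one_mul]
        exact ContinuousLinearMap.le_opNorm _ _
    _ = opNorm B * Real.sqrt (hH.eigenvalues i) := by rw [one_mul, hTw i]

lemma opNorm_le_traceNorm (T : Matrix n n ℂ) : opNorm T ≤ traceNorm T := by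
  refine ContinuousLinearMap.opNorm_le_bound _ (traceNorm_nonneg T) fun u => ?_
  set z : EuclideanSpace ℂ n := Matrix.toEuclideanCLM (𝕜 := ℂ) T u with hz
  set B : Matrix n n ℂ := Matrix.of fun j k => u j * (starRingEnd ℂ) (z k) with hB
  have happ : ∀ v : EuclideanSpace ℂ n,
      Matrix.toEuclideanCLM (𝕜 := ℂ) B v = (inner ℂ z v : ℂ) • u := by
    intro v
    apply (WithLp.equiv 2 (n → ℂ)).injective
    ext j
    rw [WithLp.equiv_apply, WithLp.equiv_apply, Matrix.ofLp_toEuclideanCLM]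
    simp only [Matrix.mulVec, dotProduct, Matrix.of_apply,
      PiLp.smul_apply, PiLp.inner_apply, RCLike.inner_apply, smul_eq_mul, hB]
    rw [Finset.sum_mul]
    exact Finset.sum_congr rfl fun k _ => by ring
  have hBnorm : opNorm B ≤ ‖u‖ * ‖z‖ := by
    refine ContinuousLinearMap.opNorm_le_bound _ (by positivity) fun v => ?_
    rw [happ v, norm_smul]
    calc ‖(inner ℂ z v : ℂ)‖ * ‖u‖ ≤ (‖z‖ * ‖v‖) * ‖u‖ :=
          mul_le_mul_of_nonneg_right (norm_inner_le_norm _ _) (norm_nonneg _)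
      _ = ‖u‖ * ‖z‖ * ‖v‖ := by ring
  have htr : Matrix.trace (B * T) = (‖z‖ : ℂ) ^ 2 := by
    have h1 : (inner ℂ z z : ℂ) = (‖z‖ : ℂ) ^ 2 := inner_self_eq_norm_sq_to_K z
    rw [← h1]
    have hzk : ∀ k, z k = ∑ j, T k j * u j := fun k => rfl
    simp only [Matrix.trace, Matrix.diag_apply, Matrix.mul_apply, Matrix.of_apply,
      PiLp.inner_apply, RCLike.inner_apply, hB]
    rw [Finset.sum_comm]
    refine Finset.sum_congr rfl fun a _ => ?_
    calc ∑ x, (u x * (starRingEnd ℂ) (z a)) * T a x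
        = (starRingEnd ℂ) (z a) * ∑ x, T a x * u x := by
          rw [Finset.mul_sum]; exact Finset.sum_congr rfl fun b _ => by ring
      _ = (starRingEnd ℂ) (z a) * z a := by rw [← hzk a]
      _ = z a * (starRingEnd ℂ) (z a) := mul_comm _ _
  have hsq : ‖z‖ ^ 2 ≤ ‖u‖ * ‖z‖ * traceNorm T := by
    have := abs_trace_mul_le T B
    rw [htr] at this
    have habs : ‖(‖z‖ : ℂ) ^ 2‖ = ‖z‖ ^ 2 := by
      rw [← Complex.ofReal_pow, Complex.norm_real, Real.norm_eq_abs, abs_of_nonneg (by positivity)]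
    rw [habs] at this
    calc ‖z‖ ^ 2 ≤ opNorm B * traceNorm T := this
      _ ≤ ‖u‖ * ‖z‖ * traceNorm T :=
          mul_le_mul_of_nonneg_right hBnorm (traceNorm_nonneg T)
  rcases eq_or_lt_of_le (norm_nonneg z) with hz0 | hz0
  · rw [← hz0]
    exact mul_nonneg (traceNorm_nonneg T) (norm_nonneg u)
  · have := (mul_le_mul_iff_of_pos_right hz0).mp (by nlinarith : ‖z‖ * ‖z‖ ≤ (traceNorm T * ‖u‖) * ‖z‖)
    linarith

lemma norm_ringInverse_one_add_le {R : Type*} [NormedRing R] [CompleteSpace R]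
    (t : R) (h : ‖t‖ < 1) (h1 : ‖(1 : R)‖ ≤ 1) :
    IsUnit (1 + t) ∧ ‖Ring.inverse (1 + t)‖ ≤ (1 - ‖t‖)⁻¹ := by
  have hneg : ‖-t‖ < 1 := by rwa [norm_neg]
  have hadd : (1 : R) + t = 1 - (-t) := by rw [sub_neg_eq_add]
  constructor
  · rw [hadd]; exact isUnit_one_sub_of_norm_lt_one hneg
  · rw [hadd, ← geom_series_eq_inverse (-t) hneg]
    refine le_trans (tsum_geometric_le_of_norm_lt_one (-t) hneg) ?_
    rw [norm_neg]
    linarith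

lemma det_factor (T M N : Matrix n n ℂ) (z c : ℂ) (hMN : M * N = T)
    (hM : (1 : Matrix n n ℂ) + c • T = M) :
    (1 + z • T).det = M.det * (1 + (z - c) • N).det := by
  rw [← Matrix.det_mul, Matrix.mul_add, Matrix.mul_one, Matrix.mul_smul, hMN, ← hM]
  rw [add_assoc, ← add_smul, show c + (z - c) = z from by ring]

lemma hasDerivAt_det_one_add_smul_zero (N : Matrix n n ℂ) :
    HasDerivAt (fun z : ℂ => (1 + z • N).det) (Matrix.trace N) 0 := by
  have hfun : (fun z : ℂ => (1 + z • N).det)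
      = fun z : ℂ => 1 + Matrix.trace N * z
        + ((1 + (Polynomial.X : Polynomial ℂ) • N.map Polynomial.C).det).divX.divX.eval z * z ^ 2 := by
    funext z
    exact Matrix.det_one_add_smul z N
  rw [hfun]
  set Q := ((1 + (Polynomial.X : Polynomial ℂ) • N.map Polynomial.C).det).divX.divX
  have h1 : HasDerivAt (fun z : ℂ => 1 + Matrix.trace N * z) (Matrix.trace N) 0 := by
    simpa using ((hasDerivAt_id (0 : ℂ)).const_mul (Matrix.trace N)).const_add 1
  have h2 : HasDerivAt (fun z : ℂ => Q.eval z * z ^ 2) 0 0 := by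
    have hq : HasDerivAt (fun z : ℂ => Q.eval z) (Q.derivative.eval 0) 0 := Q.hasDerivAt 0
    have hp : HasDerivAt (fun z : ℂ => z ^ 2) 0 0 := by
      simpa using hasDerivAt_pow 2 (0 : ℂ)
    simpa [Pi.mul_def] using hq.mul hp
  simpa [Pi.add_def] using h1.add h2

set_option maxHeartbeats 1000000 in
set_option synthInstance.maxHeartbeats 200000 in
lemma hasDerivAt_f (T : Matrix n n ℂ) (hT : traceNorm T < 1) {s : ℝ} (hs0 : 0 ≤ s) (hs1 : s ≤ 1) :
    HasDerivAt (fun r : ℝ => ((1 : Matrix n n ℂ) + (r : ℂ) • T).det)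
      (((1 : Matrix n n ℂ) + (s : ℂ) • T).det *
        Matrix.trace ((Matrix.toEuclideanCLM (𝕜 := ℂ)).symm
          (Ring.inverse (Matrix.toEuclideanCLM (𝕜 := ℂ) ((1 : Matrix n n ℂ) + (s : ℂ) • T))) * T)) s ∧
    ‖Matrix.trace ((Matrix.toEuclideanCLM (𝕜 := ℂ)).symm
        (Ring.inverse (Matrix.toEuclideanCLM (𝕜 := ℂ) ((1 : Matrix n n ℂ) + (s : ℂ) • T))) * T)‖
      ≤ (1 - s * traceNorm T)⁻¹ * traceNorm T := by
  have hx0 := traceNorm_nonneg T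
  set x := traceNorm T with hxdef
  set c : ℂ := (s : ℂ) with hc
  set T' := Matrix.toEuclideanCLM (𝕜 := ℂ) T with hT'
  have hTop : ‖T'‖ ≤ x := opNorm_le_traceNorm T
  have ht : ‖c • T'‖ ≤ s * x := by
    have hns : ‖c • T'‖ = ‖c‖ * ‖T'‖ := norm_smul c T'
    rw [hns, hc, Complex.norm_real, Real.norm_eq_abs, abs_of_nonneg hs0]
    exact mul_le_mul_of_nonneg_left hTop hs0
  have hsx : s * x ≤ x := mul_le_of_le_one_left hx0 hs1
  have hsx1 : s * x < 1 := lt_of_le_of_lt hsx hT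
  have htlt : ‖c • T'‖ < 1 := lt_of_le_of_lt ht hsx1
  set M : Matrix n n ℂ := (1 : Matrix n n ℂ) + c • T with hMdef
  have hM'eq : Matrix.toEuclideanCLM (𝕜 := ℂ) M = 1 + c • T' := by
    rw [hMdef, map_add, map_one, _root_.map_smul, hT']
  have h1le : ‖(1 : EuclideanSpace ℂ n →L[ℂ] EuclideanSpace ℂ n)‖ ≤ 1 := by
    rw [ContinuousLinearMap.one_def]
    exact ContinuousLinearMap.norm_id_le
  obtain ⟨hunit, hinv⟩ := norm_ringInverse_one_add_le (c • T') htlt h1le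
  have hMunit : IsUnit (Matrix.toEuclideanCLM (𝕜 := ℂ) M) := by rw [hM'eq]; exact hunit
  set Minv : Matrix n n ℂ :=
    (Matrix.toEuclideanCLM (𝕜 := ℂ)).symm (Ring.inverse (Matrix.toEuclideanCLM (𝕜 := ℂ) M))
    with hMinv
  have hMinvnorm : opNorm Minv ≤ (1 - s * x)⁻¹ := by
    rw [opNorm, hMinv, StarAlgEquiv.apply_symm_apply, hM'eq]
    refine le_trans hinv ?_
    refine inv_anti₀ (by linarith) (by linarith)
  constructor
  · -- derivative
    have hMMinv : M * Minv = 1 := by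
      have h1 : Matrix.toEuclideanCLM (𝕜 := ℂ) M
          * Ring.inverse (Matrix.toEuclideanCLM (𝕜 := ℂ) M) = 1 :=
        Ring.mul_inverse_cancel _ hMunit
      calc M * Minv
          = (Matrix.toEuclideanCLM (𝕜 := ℂ)).symm (Matrix.toEuclideanCLM (𝕜 := ℂ) M)
            * (Matrix.toEuclideanCLM (𝕜 := ℂ)).symm
              (Ring.inverse (Matrix.toEuclideanCLM (𝕜 := ℂ) M)) := by
            rw [StarAlgEquiv.symm_apply_apply]
        _ = (Matrix.toEuclideanCLM (𝕜 := ℂ)).symm (Matrix.toEuclideanCLM (𝕜 := ℂ) M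
            * Ring.inverse (Matrix.toEuclideanCLM (𝕜 := ℂ) M)) := (map_mul _ _ _).symm
        _ = 1 := by rw [h1, map_one]
    have hfeq : ∀ z : ℂ, ((1 : Matrix n n ℂ) + z • T).det
        = M.det * ((1 : Matrix n n ℂ) + (z - c) • (Minv * T)).det := fun z =>
      det_factor T M (Minv * T) z c (by rw [← Matrix.mul_assoc, hMMinv, Matrix.one_mul]) rfl
    have hsub : HasDerivAt (fun z : ℂ => z - c) 1 c := (hasDerivAt_id c).sub_const c
    have hinner : HasDerivAt (fun z : ℂ => ((1 : Matrix n n ℂ) + (z - c) • (Minv * T)).det)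
        (Matrix.trace (Minv * T)) c := by
      have h0 : HasDerivAt (fun z : ℂ => ((1 : Matrix n n ℂ) + z • (Minv * T)).det)
          (Matrix.trace (Minv * T)) (c - c) := by
        rw [sub_self]; exact hasDerivAt_det_one_add_smul_zero (Minv * T)
      exact HasDerivAt.comp_sub_const c c h0
    have hg : HasDerivAt (fun z : ℂ => ((1 : Matrix n n ℂ) + z • T).det)
        (M.det * Matrix.trace (Minv * T)) c := by
      have h := hinner.const_mul M.det
      have hfun : (fun z : ℂ => M.det * ((1 : Matrix n n ℂ) + (z - c) • (Minv * T)).det)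
          = fun z : ℂ => ((1 : Matrix n n ℂ) + z • T).det := by
        funext z; exact (hfeq z).symm
      rwa [hfun] at h
    exact hg.comp_ofReal
  · -- trace bound
    refine le_trans (abs_trace_mul_le T Minv) ?_
    exact mul_le_mul_of_nonneg_right hMinvnorm hx0

end Aux

theorem stmt10 {n : Type*} [Fintype n] [DecidableEq n]
    (T : Matrix n n ℂ) (hT : traceNorm T < 1) :
    ‖(1 + T).det - 1‖ ≤ traceNorm T / (1 - traceNorm T) := by
  have hx0 := traceNorm_nonneg T
  set x := traceNorm T with hxdef
  set f : ℝ → ℂ := fun r => ((1 : Matrix n n ℂ) + (r : ℂ) • T).det with hf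
  set τ : ℝ → ℂ := fun r => Matrix.trace ((Matrix.toEuclideanCLM (𝕜 := ℂ)).symm
      (Ring.inverse (Matrix.toEuclideanCLM (𝕜 := ℂ) ((1 : Matrix n n ℂ) + (r : ℂ) • T))) * T)
    with hτ
  have hf1 : f 1 = (1 + T).det := by
    rw [hf]; norm_num
  have hf0 : f 0 = 1 := by
    rw [hf]; norm_num
  -- main estimate for any y with x < y < 1
  have key : ∀ y : ℝ, x < y → y < 1 → ‖f 1 - 1‖ ≤ 1 * y / (1 - 1 * y) := by
    intro y hxy hy1
    have hy0 : 0 < y := lt_of_le_of_lt hx0 hxy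
    have main := image_norm_le_of_norm_deriv_right_lt_deriv_boundary'
      (f := fun s => f s - 1) (f' := fun s => f s * τ s) (a := 0) (b := 1)
      (B := fun s => s * y / (1 - s * y)) (B' := fun s => y / (1 - s * y) ^ 2)
      ?hcont ?hderiv ?ha ?hBcont ?hBderiv ?hbound
    case hcont =>
      intro s hs
      exact (((hasDerivAt_f T hT hs.1 hs.2).1.sub_const 1)).continuousAt.continuousWithinAt
    case hderiv =>
      intro s hs
      exact ((hasDerivAt_f T hT hs.1 (le_of_lt hs.2)).1.sub_const 1).hasDerivWithinAt
    case ha =>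
      simp [hf0]
    case hBcont =>
      refine ContinuousOn.div (by fun_prop) (by fun_prop) ?_
      intro s hs
      have : s * y ≤ y := mul_le_of_le_one_left (le_of_lt hy0) hs.2
      nlinarith
    case hBderiv =>
      intro s hs
      have hden : 1 - s * y ≠ 0 := by
        have h1 : s * y ≤ y := mul_le_of_le_one_left (le_of_lt hy0) (le_of_lt hs.2)
        nlinarith
      have hu : HasDerivAt (fun s : ℝ => s * y) y s := by
        simpa using (hasDerivAt_id s).mul_const y
      have hv : HasDerivAt (fun s : ℝ => 1 - s * y) (-y) s := by
        simpa using ((hasDerivAt_id s).mul_const y).const_sub 1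
      have := hu.fun_div hv hden
      refine HasDerivAt.hasDerivWithinAt ?_
      rw [show y / (1 - s * y) ^ 2 = (y * (1 - s * y) - s * y * -y) / (1 - s * y) ^ 2 by ring]
      exact this
    case hbound =>
      intro s hs hBs
      have hsy : s * y < 1 := by nlinarith [hs.1, hs.2]
      have hsx : s * x < 1 := by nlinarith [hs.1, hs.2]
      have hsxy : 1 - s * y ≤ 1 - s * x := by nlinarith [hs.1]
      have hpy : (0:ℝ) < 1 - s * y := by linarith
      have hpx : (0:ℝ) < 1 - s * x := by linarith
      have htau := (hasDerivAt_f T hT hs.1 (le_of_lt hs.2)).2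
      have hfs : ‖f s‖ ≤ (1 - s * y)⁻¹ := by
        have h1 : ‖f s‖ ≤ ‖f s - 1‖ + 1 := by
          calc ‖f s‖ = ‖(f s - 1) + 1‖ := by ring_nf
            _ ≤ ‖f s - 1‖ + ‖(1:ℂ)‖ := norm_add_le _ _
            _ = ‖f s - 1‖ + 1 := by norm_num
        rw [hBs] at h1
        have : s * y / (1 - s * y) + 1 = (1 - s * y)⁻¹ := by field_simp; ring
        linarith [h1, this.symm.le]
      have hτs : ‖τ s‖ ≤ (1 - s * x)⁻¹ * x := by
        exact htau
      calc ‖f s * τ s‖ = ‖f s‖ * ‖τ s‖ := norm_mul _ _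
        _ ≤ (1 - s * y)⁻¹ * ((1 - s * x)⁻¹ * x) := by
            exact mul_le_mul hfs hτs (norm_nonneg _) (by positivity)
        _ < y / (1 - s * y) ^ 2 := by
            rw [div_eq_mul_inv, pow_two, mul_inv]
            have hxlt : x * (1 - s * y) < y * (1 - s * x) := by nlinarith
            have h2 : (1 - s * x)⁻¹ * x < (1 - s * y)⁻¹ * y := by
              rw [inv_mul_eq_div, inv_mul_eq_div, div_lt_div_iff₀ hpx hpy]
              nlinarith
            calc (1 - s * y)⁻¹ * ((1 - s * x)⁻¹ * x)
                < (1 - s * y)⁻¹ * ((1 - s * y)⁻¹ * y) := by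
                  exact mul_lt_mul_of_pos_left h2 (by positivity)
              _ = y * ((1 - s * y)⁻¹ * (1 - s * y)⁻¹) := by ring
        _ = y / (1 - s * y) ^ 2 := by rw [div_eq_mul_inv, pow_two, mul_inv]
    have h1 := main (Set.right_mem_Icc.mpr (by norm_num))
    simpa [hf1] using h1
  -- take the limit y → x⁺
  have hlim : Filter.Tendsto (fun y : ℝ => 1 * y / (1 - 1 * y)) (nhdsWithin x (Set.Ioi x))
      (nhds (x / (1 - x))) := by
    have hc : ContinuousAt (fun y : ℝ => 1 * y / (1 - 1 * y)) x := by
      apply ContinuousAt.div (by fun_prop) (by fun_prop)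
      simp only [one_mul]
      linarith
    have h2 : Filter.Tendsto (fun y : ℝ => 1 * y / (1 - 1 * y)) (nhdsWithin x (Set.Ioi x))
        (nhds (1 * x / (1 - 1 * x))) := hc.tendsto.mono_left nhdsWithin_le_nhds
    simpa using h2
  have hev : ∀ᶠ y in nhdsWithin x (Set.Ioi x),
      ‖(1 + T).det - 1‖ ≤ 1 * y / (1 - 1 * y) := by
    filter_upwards [Ioo_mem_nhdsGT_of_mem (Set.mem_Ico.mpr ⟨le_refl x, hT⟩)] with y hy
    rw [← hf1]
    exact key y hy.1 hy.2
  exact ge_of_tendsto hlim hev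


end Chiral

end
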